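/- Let K be a field and S a numerical-semigroup-like submonoid of G_{≥0} for G a rank-one subgroup of ℝ, with D = [[K^S]] ⊆ V = [[K^{G_{≥0}}]] having the same quotient field. If D is maximal excluding (with excluded element X^a for some a ∈ G_{≥0}\S), then the integral closure of D is V. More precisely, the root closure S̄ = ⋃_{n≥1}{g ∈ G : ng ∈ S} equals G_{≥0}. -/

import Mathlib

variable {Γ : Type*} [AddCommGroup Γ] [LinearOrder Γ] [IsOrderedAddMonoid Γ] {K : Type*} [Field K]

/-- The generalized power series ring `[[K^S]]`: the subring of the Hahn series field
`HahnSeries Γ K` consisting of series with support contained in the submonoid `S`. -/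
def hahnSubring (K : Type*) [Field K] (S : AddSubmonoid Γ) : Subring (HahnSeries Γ K) where
  carrier := {f | ∀ g : Γ, f.coeff g ≠ 0 → g ∈ S}
  zero_mem' := by intro g hg; simp at hg
  one_mem' := by
    intro g hg
    rw [HahnSeries.coeff_one] at hg
    by_cases h : g = 0
    · exact h ▸ S.zero_mem
    · simp [h] at hg
  add_mem' := by
    intro a b ha hb g hg
    rw [HahnSeries.coeff_add] at hg
    by_cases h : a.coeff g = 0
    · exact hb g (by intro h'; rw [h, h'] at hg; simp at hg)
    · exact ha g h
  neg_mem' := by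
    intro a ha g hg
    rw [HahnSeries.coeff_neg] at hg
    exact ha g (by simpa using hg)
  mul_mem' := by
    intro a b ha hb g hg
    obtain ⟨i, hi, j, hj, rfl⟩ :=
      HahnSeries.support_mul_subset ((HahnSeries.mem_support _ _).mpr hg)
    exact S.add_mem (ha i hi) (hb j hj)

theorem coeff_pow_bound {z : HahnSeries Γ K} {o : Γ} (hz : ∀ g, z.coeff g ≠ 0 → o ≤ g) :
    ∀ (n : ℕ) (g : Γ), (z ^ (n + 1)).coeff g ≠ 0 → (n + 1) • o ≤ g := by
  intro n
  induction n with
  | zero => intro g hg; simpa using hz g (by simpa using hg)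
  | succ k ih =>
    intro g hg
    have hg' : g ∈ (z ^ (k + 1) * z).support := by
      rw [← pow_succ]; rw [HahnSeries.mem_support]; exact hg
    obtain ⟨i, hi, j, hj, rfl⟩ := HahnSeries.support_mul_subset hg'
    have h1 := ih i ((HahnSeries.mem_support _ _).mp hi)
    have h2 := hz j ((HahnSeries.mem_support _ _).mp hj)
    calc (k + 1 + 1) • o = (k + 1) • o + o := by rw [succ_nsmul]
    _ ≤ i + j := add_le_add h1 h2

/-- **Corollary 3.7.**
Let `G` be a (rank-one) subgroup of `(ℝ, +)`, `S` a submonoid of `G_{≥0}`, and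
`D = [[K^S]] ⊆ V = [[K^{G_{≥0}}]]` with the same quotient field.  If `D` is maximal
excluding (with excluded element `X^a`, `a ∈ G_{≥0} \ S`), then the root closure
`S̄ = ⋃_{n ≥ 1} {g : n·g ∈ S}` equals `G_{≥0}`, and the integral closure of `D` is `V`:
an element of the Hahn series field lies in `V` iff it is integral over `D`. -/
theorem hahnSubring_rank_one_integral_closure
    (G : AddSubgroup ℝ)
    (S : AddSubmonoid G) (hS : S ≤ AddSubmonoid.nonneg G)
    (a : G) (ha0 : 0 ≤ a) (haS : a ∉ S)
    (hXa : HahnSeries.single a (1 : K) ∉ hahnSubring K S)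
    (hfrac : ∀ x : HahnSeries G K,
      (∃ f g : HahnSeries G K, f ∈ hahnSubring K (AddSubmonoid.nonneg G) ∧
          g ∈ hahnSubring K (AddSubmonoid.nonneg G) ∧ g ≠ 0 ∧ x = f / g) ↔
      (∃ f g : HahnSeries G K, f ∈ hahnSubring K S ∧ g ∈ hahnSubring K S ∧
          g ≠ 0 ∧ x = f / g))
    (hmax : ∀ z : HahnSeries G K,
      (∃ f g : HahnSeries G K, f ∈ hahnSubring K S ∧ g ∈ hahnSubring K S ∧
          g ≠ 0 ∧ z = f / g) →
      z ∉ hahnSubring K S →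
      HahnSeries.single a (1 : K) ∈
        Subring.closure (insert z (hahnSubring K S : Set (HahnSeries G K)))) :
    ({g : G | 0 ≤ g} = {g : G | ∃ n : ℕ, 0 < n ∧ n • g ∈ S}) ∧
      (∀ x : HahnSeries G K, x ∈ hahnSubring K (AddSubmonoid.nonneg G) ↔
        ∃ p : Polynomial (HahnSeries G K), p.Monic ∧
          (∀ n, p.coeff n ∈ hahnSubring K S) ∧ p.eval x = 0) := by
  -- The key fact: every element strictly larger than `a` lies in `S`.
  have hkey : ∀ h : G, a < h → h ∈ S := by
    intro h hh
    by_contra hhS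
    have hh0 : (0 : G) ≤ h := le_of_lt (lt_of_le_of_lt ha0 hh)
    set z : HahnSeries G K := HahnSeries.single h (1 : K) with hzdef
    have hzV : z ∈ hahnSubring K (AddSubmonoid.nonneg G) := by
      intro g hg
      rw [HahnSeries.coeff_single] at hg
      by_cases hgh : g = h
      · subst hgh; simpa using hh0
      · simp [hgh] at hg
    have hzfrac : ∃ f g : HahnSeries G K, f ∈ hahnSubring K S ∧ g ∈ hahnSubring K S ∧
        g ≠ 0 ∧ z = f / g :=
      (hfrac z).mp ⟨z, 1, hzV, one_mem _, one_ne_zero, (div_one z).symm⟩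
    have hzD : z ∉ hahnSubring K S := by
      intro hz
      exact hhS (hz h (by rw [HahnSeries.coeff_single_same]; exact one_ne_zero))
    have hcl := hmax z hzfrac hzD
    set T : AddSubmonoid G := AddSubmonoid.closure (insert h (S : Set G)) with hTdef
    have hsub : Subring.closure (insert z (hahnSubring K S : Set (HahnSeries G K))) ≤
        hahnSubring K T := by
      apply Subring.closure_le.mpr
      intro w hw
      rcases hw with hw | hw
      · subst hw
        intro g hg
        rw [HahnSeries.coeff_single] at hg
        by_cases hgh : g = h
        · subst hgh; exact AddSubmonoid.subset_closure (Set.mem_insert _ _)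
        · simp [hgh] at hg
      · intro g hg
        exact AddSubmonoid.closure_mono (Set.subset_insert _ _)
          (AddSubmonoid.subset_closure (hw g hg))
    have haT : a ∈ T := hsub hcl a (by rw [HahnSeries.coeff_single_same]; exact one_ne_zero)
    rw [hTdef, Set.insert_eq, AddSubmonoid.closure_union, AddSubmonoid.closure_eq] at haT
    rw [AddSubmonoid.mem_sup] at haT
    obtain ⟨y, hy, s, hs, hys⟩ := haT
    rw [AddSubmonoid.mem_closure_singleton] at hy
    obtain ⟨n, rfl⟩ := hy
    have hs0 : (0 : G) ≤ s := (AddSubmonoid.mem_nonneg).mp (hS hs)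
    rcases Nat.eq_zero_or_pos n with rfl | hn
    · simp at hys; exact haS (hys ▸ hs)
    · -- n • h + s = a, but n • h ≥ h > a and s ≥ 0
      have hR : (n : ℝ) * (h : ℝ) + (s : ℝ) = (a : ℝ) := by
        have := congrArg (fun t : G => (t : ℝ)) hys
        push_cast at this
        simpa [nsmul_eq_mul] using this
      have hsR : (0 : ℝ) ≤ (s : ℝ) := by exact_mod_cast hs0
      have hhR : (a : ℝ) < (h : ℝ) := by exact_mod_cast hh
      have haR : (0 : ℝ) ≤ (a : ℝ) := by exact_mod_cast ha0
      have hnR : (1 : ℝ) ≤ (n : ℝ) := by exact_mod_cast hn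
      nlinarith
  have hnsmul : ∀ (k : ℕ) (t : G), (((k • t : G)) : ℝ) = (k : ℝ) * (t : ℝ) := by
    intro k t
    induction k with
    | zero => simp
    | succ m ih => rw [succ_nsmul]; push_cast [ih]; ring
  constructor
  · ext g
    simp only [Set.mem_setOf_eq]
    constructor
    · intro hg
      rcases eq_or_lt_of_le hg with hg0 | hg0
      · exact ⟨1, one_pos, by rw [← hg0]; simpa using S.zero_mem⟩
      · have hgR : (0 : ℝ) < (g : ℝ) := by exact_mod_cast hg0
        obtain ⟨n, hn⟩ := Archimedean.arch (a : ℝ) hgR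
        refine ⟨n + 1, Nat.succ_pos n, hkey _ ?_⟩
        have hq : (a : ℝ) < (((n + 1) • g : G) : ℝ) := by
          rw [hnsmul]
          have hnR : (a : ℝ) ≤ (n : ℝ) * (g : ℝ) := by
            have := hn; rw [nsmul_eq_mul] at this; exact this
          push_cast
          nlinarith
        exact_mod_cast hq
    · rintro ⟨n, hn, hnS⟩
      have h0 : (0 : G) ≤ n • g := (AddSubmonoid.mem_nonneg).mp (hS hnS)
      have h0R : (0 : ℝ) ≤ (n : ℝ) * (g : ℝ) := by
        have : ((0 : G) : ℝ) ≤ (((n • g : G)) : ℝ) := by exact_mod_cast h0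
        rwa [hnsmul] at this
      by_contra hg
      rw [not_le] at hg
      have hgR : (g : ℝ) < 0 := by exact_mod_cast hg
      have hnR : (1 : ℝ) ≤ (n : ℝ) := by exact_mod_cast hn
      nlinarith
  · intro x
    constructor
    · intro hx
      classical
      set y : HahnSeries G K := HahnSeries.single 0 (x.coeff 0) with hydef
      have hyD : y ∈ hahnSubring K S := by
        intro g hg
        rw [hydef, HahnSeries.coeff_single] at hg
        by_cases hg0 : g = 0
        · exact hg0 ▸ S.zero_mem
        · simp [hg0] at hg
      set z : HahnSeries G K := x - y with hzdef
      have hz0 : z.coeff 0 = 0 := by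
        rw [hzdef, HahnSeries.coeff_sub, hydef, HahnSeries.coeff_single_same, sub_self]
      have hzpos : ∀ g, z.coeff g ≠ 0 → 0 < g := by
        intro g hg
        have hgne : g ≠ 0 := by rintro rfl; exact hg hz0
        have hzx : z.coeff g = x.coeff g := by
          rw [hzdef, HahnSeries.coeff_sub, hydef, HahnSeries.coeff_single_of_ne hgne, sub_zero]
        rw [hzx] at hg
        exact lt_of_le_of_ne ((AddSubmonoid.mem_nonneg).mp (hx g hg)) (Ne.symm hgne)
      obtain ⟨n, hn, hznD⟩ : ∃ n : ℕ, 0 < n ∧ z ^ n ∈ hahnSubring K S := by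
        rcases eq_or_ne z 0 with hz | hz
        · exact ⟨1, one_pos, by rw [hz, pow_one]; exact (hahnSubring K S).zero_mem⟩
        · have hoz : z.coeff z.order ≠ 0 := (HahnSeries.coeff_order_eq_zero.not.mpr hz)
          have ho : 0 < z.order := hzpos z.order hoz
          have hoR : (0 : ℝ) < (z.order : ℝ) := by exact_mod_cast ho
          obtain ⟨m, hm⟩ := Archimedean.arch (a : ℝ) hoR
          refine ⟨m + 1, Nat.succ_pos m, ?_⟩
          intro g hg
          have hle := coeff_pow_bound
            (fun g hg => HahnSeries.order_le_of_coeff_ne_zero hg) m g hg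
          apply hkey
          have h2 : ((((m + 1) • z.order : G)) : ℝ) ≤ (g : ℝ) := by exact_mod_cast hle
          rw [hnsmul] at h2
          have hmR : (a : ℝ) ≤ (m : ℝ) * (z.order : ℝ) := by
            have := hm; rw [nsmul_eq_mul] at this; exact this
          have : (a : ℝ) < (g : ℝ) := by push_cast at h2; nlinarith
          exact_mod_cast this
      refine ⟨((Polynomial.X - Polynomial.C (⟨y, hyD⟩ : hahnSubring K S)) ^ n -
          Polynomial.C (⟨z ^ n, hznD⟩ : hahnSubring K S)).map (hahnSubring K S).subtype,
          ?_, ?_, ?_⟩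
      · apply Polynomial.Monic.map
        apply Polynomial.Monic.sub_of_left ((Polynomial.monic_X_sub_C _).pow n)
        refine lt_of_le_of_lt Polynomial.degree_C_le ?_
        rw [Polynomial.degree_pow, Polynomial.degree_X_sub_C, nsmul_eq_mul, mul_one]
        exact_mod_cast hn
      · intro k
        rw [Polynomial.coeff_map]
        exact SetLike.coe_mem _
      · rw [Polynomial.eval_map]
        simp only [Polynomial.eval₂_sub, Polynomial.eval₂_pow, Polynomial.eval₂_X,
          Polynomial.eval₂_C]
        show (x - y) ^ n - z ^ n = 0
        rw [← hzdef, sub_self]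
    · rintro ⟨p, hpm, hpc, hpe⟩
      intro g hg
      rw [AddSubmonoid.mem_nonneg]
      by_contra hg0
      rw [not_le] at hg0
      have hx0 : x ≠ 0 := by rintro rfl; simp at hg
      have hog : x.order ≤ g := HahnSeries.order_le_of_coeff_ne_zero hg
      have ho : x.order < 0 := lt_of_le_of_lt hog hg0
      have hn : 0 < p.natDegree := by
        rcases Nat.eq_zero_or_pos p.natDegree with h0 | h
        · exfalso
          have hp1 : p = 1 := (Polynomial.Monic.natDegree_eq_zero hpm).mp h0
          rw [hp1] at hpe; simp at hpe
        · exact h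
      set n := p.natDegree with hndef
      have heval := hpe
      rw [Polynomial.eval_eq_sum_range, Finset.sum_range_succ] at heval
      have hcn : p.coeff n = 1 := hpm.coeff_natDegree
      rw [hcn, one_mul] at heval
      have heq : x ^ n = -∑ i ∈ Finset.range n, p.coeff i * x ^ i :=
        eq_neg_of_add_eq_zero_right heval
      have hL : (x ^ n).coeff (n • x.order) ≠ 0 := by
        have hxn : x ^ n ≠ 0 := pow_ne_zero _ hx0
        have hord : (x ^ n).order = n • x.order := HahnSeries.order_pow x n
        rw [← hord]
        exact (HahnSeries.coeff_order_eq_zero.not.mpr hxn)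
      have hsum : (∑ i ∈ Finset.range n, p.coeff i * x ^ i).coeff (n • x.order) =
          ∑ i ∈ Finset.range n, (p.coeff i * x ^ i).coeff (n • x.order) :=
        map_sum (HahnSeries.coeff.addMonoidHom (n • x.order)) _ _
      have hR : (∑ i ∈ Finset.range n, p.coeff i * x ^ i).coeff (n • x.order) = 0 := by
        rw [hsum]
        apply Finset.sum_eq_zero
        intro i hi
        rw [Finset.mem_range] at hi
        by_contra hne
        obtain ⟨u, hu, v, hv, huv⟩ := HahnSeries.support_mul_subset
          ((HahnSeries.mem_support _ _).mpr hne)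
        have hu0 : (0 : G) ≤ u :=
          (AddSubmonoid.mem_nonneg).mp (hS (hpc i u ((HahnSeries.mem_support _ _).mp hu)))
        have hvord : (i • x.order : G) ≤ v := by
          have hvo := HahnSeries.order_le_of_coeff_ne_zero ((HahnSeries.mem_support _ _).mp hv)
          rwa [HahnSeries.order_pow] at hvo
        have hco : (u : ℝ) + (v : ℝ) = (n : ℝ) * (x.order : ℝ) := by
          have := congrArg (fun t : G => (t : ℝ)) huv
          push_cast at this
          rw [nsmul_eq_mul] at this
          exact this
        have hu0R : (0 : ℝ) ≤ (u : ℝ) := by exact_mod_cast hu0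
        have hvR : (i : ℝ) * (x.order : ℝ) ≤ (v : ℝ) := by
          have : ((i • x.order : G) : ℝ) ≤ (v : ℝ) := by exact_mod_cast hvord
          rwa [hnsmul] at this
        have hoR : (x.order : ℝ) < 0 := by exact_mod_cast ho
        have hiR : (i : ℝ) < (n : ℝ) := by exact_mod_cast hi
        nlinarith [mul_lt_mul_of_neg_right hiR hoR]
      rw [heq, HahnSeries.coeff_neg, hR, neg_zero] at hL
      exact hL rfl
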